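/- Let d ≥ 1 and let θ₁, θ₂ ∈ (−3π/2, π/2). Define s_i = (cos θ_i, 0, …, 0, sin θ_i) ∈ 𝕊^d ⊂ ℝ^{d+1} for i = 1, 2 (first coordinate cos θ_i, last coordinate sin θ_i, all other coordinates zero). Then ‖h₁(φ(s₁)) − h₁(φ(s₂))‖ = |θ₁ − θ₂|, and arccos(⟨s₁, s₂⟩) = min( ‖h₁(φ(s₁)) − h₁(φ(s₂))‖ , 2π − ‖h₁(φ(s₁)) − h₁(φ(s₂))‖ ). (These points s₁, s₂ lie on the great circle through the north pole s_n and the south pole s₀.) -/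

import Mathlib

open Real
open scoped RealInnerProductSpace

noncomputable section

/-- The first `d` coordinates of a point of `ℝ^{d+1}`, i.e. `s[1:d]`. -/
def stereoProj {d : ℕ} (s : EuclideanSpace ℝ (Fin (d + 1))) : EuclideanSpace ℝ (Fin d) :=
  WithLp.toLp 2 (fun i => s (Fin.castSucc i))

/-- The stereographic projection `φ(s) = s[1:d] / (1 - s_{d+1})`. -/
def stereo {d : ℕ} (s : EuclideanSpace ℝ (Fin (d + 1))) : EuclideanSpace ℝ (Fin d) :=
  (1 - s (Fin.last d))⁻¹ • stereoProj s

open Classical in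
/-- The map `h₁(x) = arccos((1 - ‖x‖²)/(1 + ‖x‖²)) • x/‖x‖` for `x ≠ 0`, `h₁(0) = 0`. -/
def h1 {d : ℕ} (x : EuclideanSpace ℝ (Fin d)) : EuclideanSpace ℝ (Fin d) :=
  if x = 0 then 0 else Real.arccos ((1 - ‖x‖ ^ 2) / (1 + ‖x‖ ^ 2)) • ‖x‖⁻¹ • x

/-- The north pole `s_n = (0, …, 0, 1)` of `𝕊^d ⊂ ℝ^{d+1}`. -/
def northPole (d : ℕ) : EuclideanSpace ℝ (Fin (d + 1)) :=
  EuclideanSpace.single (Fin.last d) 1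

/-- The south pole `s₀ = (0, …, 0, -1)` of `𝕊^d ⊂ ℝ^{d+1}`. -/
def southPole (d : ℕ) : EuclideanSpace ℝ (Fin (d + 1)) :=
  EuclideanSpace.single (Fin.last d) (-1)

end


noncomputable section MyAux

lemma single_sub' {d : ℕ} (i : Fin d) (a b : ℝ) :
    (EuclideanSpace.single i a : EuclideanSpace ℝ (Fin d)) - EuclideanSpace.single i b
      = EuclideanSpace.single i (a - b) := by
  ext j
  by_cases h : j = i <;> simp [PiLp.sub_apply, EuclideanSpace.single_apply, h]

lemma smul_single' {d : ℕ} (i : Fin d) (c a : ℝ) :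
    c • (EuclideanSpace.single i a : EuclideanSpace ℝ (Fin d))
      = EuclideanSpace.single i (c * a) := by
  ext j
  by_cases h : j = i <;> simp [PiLp.smul_apply, EuclideanSpace.single_apply, h]

lemma arccos_ratio (c : ℝ) :
    Real.arccos ((1 - c ^ 2) / (1 + c ^ 2)) = 2 * Real.arctan |c| := by
  have hpos : (0:ℝ) < 1 + c ^ 2 := by positivity
  have h1 : 0 ≤ 2 * Real.arctan |c| := by
    have : Real.arctan 0 ≤ Real.arctan |c| := Real.arctan_strictMono.monotone (abs_nonneg c)
    rw [Real.arctan_zero] at this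
    linarith
  have h2 : 2 * Real.arctan |c| ≤ π := by
    have := Real.arctan_lt_pi_div_two |c|
    linarith
  rw [show ((1 - c ^ 2) / (1 + c ^ 2)) = Real.cos (2 * Real.arctan |c|) by
    rw [Real.cos_two_mul, Real.cos_sq_arctan, sq_abs]
    field_simp
    ring]
  exact Real.arccos_cos h1 h2

lemma h1_single {d : ℕ} (i : Fin d) (c : ℝ) :
    h1 (EuclideanSpace.single i c : EuclideanSpace ℝ (Fin d)) =
      EuclideanSpace.single i (2 * Real.arctan c) := by
  have hz : (EuclideanSpace.single i (0:ℝ) : EuclideanSpace ℝ (Fin d)) = 0 := by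
    ext j; by_cases h : j = i <;> simp [EuclideanSpace.single_apply, h]
  rcases eq_or_ne c 0 with rfl | hc
  · rw [hz]; simp [h1, hz, Real.arctan_zero]
  · have hne : (EuclideanSpace.single i c : EuclideanSpace ℝ (Fin d)) ≠ 0 := by
      intro h
      have := congrArg (fun v => v i) h
      simp [EuclideanSpace.single_apply] at this
      exact hc this
    unfold h1
    rw [if_neg hne, EuclideanSpace.norm_single, Real.norm_eq_abs, arccos_ratio,
      smul_single', smul_single', abs_abs]
    have hsc : 2 * Real.arctan |c| * (|c|⁻¹ * c) = 2 * Real.arctan c := by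
      rcases lt_or_gt_of_ne hc with h | h
      · rw [abs_of_neg h, Real.arctan_neg]
        have hcc : (-c)⁻¹ * c = -1 := by field_simp
        rw [hcc]; ring
      · rw [abs_of_pos h, inv_mul_cancel₀ (ne_of_gt h), mul_one]
    rw [hsc]

lemma tan_half (θ : ℝ) (ha : -(3 * π / 2) < θ) (hb : θ < π / 2) :
    2 * Real.arctan (Real.cos θ / (1 - Real.sin θ)) = θ + π / 2 ∧ Real.sin θ < 1 := by
  set t := π / 4 + θ / 2 with ht
  have ht1 : -(π / 2) < t := by rw [ht]; linarith
  have ht2 : t < π / 2 := by rw [ht]; linarith [pi_pos]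
  have hcos : 0 < Real.cos t := Real.cos_pos_of_mem_Ioo ⟨ht1, ht2⟩
  have hθ : θ = 2 * t - π / 2 := by rw [ht]; ring
  have hsin : Real.sin θ = -Real.cos (2 * t) := by
    rw [hθ, Real.sin_sub, Real.sin_pi_div_two, Real.cos_pi_div_two]; ring
  have hcosθ : Real.cos θ = Real.sin (2 * t) := by
    rw [hθ, Real.cos_sub, Real.sin_pi_div_two, Real.cos_pi_div_two]; ring
  have h1s : 1 - Real.sin θ = 2 * Real.cos t ^ 2 := by
    rw [hsin, Real.cos_two_mul]; ring
  constructor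
  · have : Real.cos θ / (1 - Real.sin θ) = Real.tan t := by
      rw [hcosθ, h1s, Real.sin_two_mul, Real.tan_eq_sin_div_cos]
      field_simp
    rw [this, Real.arctan_tan ht1 ht2, ht]; ring
  · nlinarith [h1s]

end MyAux

/-- for points `sᵢ = (cos θᵢ, 0, …, 0, sin θᵢ)` on the meridian through the
poles, with `θᵢ ∈ (-3π/2, π/2)`, one has `‖h₁(φ(s₁)) - h₁(φ(s₂))‖ = |θ₁ - θ₂|` and
`arccos ⟨s₁, s₂⟩ = min(‖h₁(φ(s₁)) - h₁(φ(s₂))‖, 2π - ‖h₁(φ(s₁)) - h₁(φ(s₂))‖)`. -/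
theorem stmt3 {d : ℕ} (hd : 1 ≤ d) (θ₁ θ₂ : ℝ)
    (hθ₁ : θ₁ ∈ Set.Ioo (-(3 * π / 2)) (π / 2))
    (hθ₂ : θ₂ ∈ Set.Ioo (-(3 * π / 2)) (π / 2))
    (s₁ s₂ : EuclideanSpace ℝ (Fin (d + 1)))
    (hs₁ : s₁ = EuclideanSpace.single (0 : Fin (d + 1)) (Real.cos θ₁)
        + EuclideanSpace.single (Fin.last d) (Real.sin θ₁))
    (hs₂ : s₂ = EuclideanSpace.single (0 : Fin (d + 1)) (Real.cos θ₂)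
        + EuclideanSpace.single (Fin.last d) (Real.sin θ₂)) :
    ‖h1 (stereo s₁) - h1 (stereo s₂)‖ = |θ₁ - θ₂| ∧
      Real.arccos ⟪s₁, s₂⟫ =
        min (‖h1 (stereo s₁) - h1 (stereo s₂)‖)
          (2 * π - ‖h1 (stereo s₁) - h1 (stereo s₂)‖) := by
  haveI : NeZero d := ⟨by omega⟩
  obtain ⟨ha1, hb1⟩ := hθ₁
  obtain ⟨ha2, hb2⟩ := hθ₂
  have hlast : (Fin.last d : Fin (d+1)) ≠ 0 := by
    intro h
    have := congrArg Fin.val h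
    simp [Fin.val_last] at this
    omega
  have main : ∀ θ : ℝ, -(3 * π / 2) < θ → θ < π / 2 →
      h1 (stereo (EuclideanSpace.single (0 : Fin (d+1)) (Real.cos θ)
          + EuclideanSpace.single (Fin.last d) (Real.sin θ)))
        = EuclideanSpace.single (0 : Fin d) (θ + π / 2) := by
    intro θ ha hb
    obtain ⟨hth, hslt⟩ := tan_half θ ha hb
    set s : EuclideanSpace ℝ (Fin (d+1)) :=
      EuclideanSpace.single (0 : Fin (d+1)) (Real.cos θ)
        + EuclideanSpace.single (Fin.last d) (Real.sin θ) with hs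
    have hproj : stereoProj s = EuclideanSpace.single (0 : Fin d) (Real.cos θ) := by
      ext i
      have hne : Fin.castSucc i ≠ Fin.last d := (Fin.castSucc_lt_last i).ne
      show s (Fin.castSucc i) = _
      by_cases h : i = 0
      · subst h
        simp [hs, PiLp.add_apply, EuclideanSpace.single_apply, hne]
        exact fun h0 => absurd h0 (by omega)
      · have h' : Fin.castSucc i ≠ 0 := by
          simp only [Fin.ne_iff_vne, Fin.coe_castSucc, Fin.val_zero] at h ⊢
          exact h
        simp [hs, PiLp.add_apply, EuclideanSpace.single_apply, hne, h', h]
    have hlastval : s (Fin.last d) = Real.sin θ := by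
      simp [hs, PiLp.add_apply, EuclideanSpace.single_apply, hlast]
    have hstereo : stereo s = EuclideanSpace.single (0 : Fin d)
        (Real.cos θ / (1 - Real.sin θ)) := by
      rw [stereo, hproj, hlastval, smul_single', inv_mul_eq_div]
    rw [hstereo, h1_single, hth]
  have hn1 := main θ₁ ha1 hb1
  have hn2 := main θ₂ ha2 hb2
  rw [hs₁, hs₂, hn1, hn2, single_sub', EuclideanSpace.norm_single, Real.norm_eq_abs]
  have habs : θ₁ + π / 2 - (θ₂ + π / 2) = θ₁ - θ₂ := by ring
  rw [habs]
  refine ⟨rfl, ?_⟩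
  have hinner : ⟪(EuclideanSpace.single (0 : Fin (d + 1)) (Real.cos θ₁)
        + EuclideanSpace.single (Fin.last d) (Real.sin θ₁) : EuclideanSpace ℝ (Fin (d+1))),
      EuclideanSpace.single (0 : Fin (d + 1)) (Real.cos θ₂)
        + EuclideanSpace.single (Fin.last d) (Real.sin θ₂)⟫ = Real.cos (θ₁ - θ₂) := by
    simp only [inner_add_left, inner_add_right, EuclideanSpace.inner_single_left, conj_trivial,
      PiLp.add_apply, EuclideanSpace.single_apply]
    rw [if_neg hlast, if_neg (Ne.symm hlast), Real.cos_sub]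
    simp
  rw [hinner]
  set a := θ₁ - θ₂ with haa
  have haub : |a| < 2 * π := by
    rw [abs_lt]
    constructor <;> [linarith [pi_pos]; linarith [pi_pos]]
  have hcabs : Real.cos a = Real.cos |a| := (Real.cos_abs a).symm
  rcases le_or_gt |a| π with hle | hlt
  · rw [hcabs, Real.arccos_cos (abs_nonneg a) hle, min_eq_left]
    linarith
  · have h2 : Real.cos |a| = Real.cos (2 * π - |a|) := (Real.cos_two_pi_sub |a|).symm
    rw [hcabs, h2, Real.arccos_cos (by linarith) (by linarith), min_eq_right]
    linarith
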